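/- Let A ∈ ℝ^{S×S} with partitioned SVD A = [U₁ U₂] diag(Σ₁, Σ₂) [V₁ V₂]ᵀ where Σ₁ is d×d, let A_d = U₁Σ₁V₁ᵀ, let Ω ∈ ℝ^{S×ℓ} with ℓ ≥ d, and set Y = AΩ, Ω₁ = V₁ᵀΩ, Ω₂ = V₂ᵀΩ. If Ω₁ has full row rank, then ‖(I − P_Y) A_d‖²_op ≤ ‖Σ₂ Ω₂ Ω₁^† ‖²_op, where P_Y is the orthogonal projection onto the column span of Y and Ω₁^† is the Moore–Penrose pseudoinverse. -/

import Mathlib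

open Matrix

/-- Spectral (ℓ₂ operator) norm of a real matrix. -/
noncomputable def opNorm {m n : ℕ} (M : Matrix (Fin m) (Fin n) ℝ) : ℝ :=
  ‖LinearMap.toContinuousLinearMap (Matrix.toEuclideanLin M)‖

/-- Column span of a matrix. -/
def colSpan {m n : ℕ} (M : Matrix (Fin m) (Fin n) ℝ) : Submodule ℝ (Fin m → ℝ) :=
  LinearMap.range M.mulVecLin

/-- `P` is the orthogonal projection onto the column span of `M`. -/
def IsOrthProjOnto {m k : ℕ} (P : Matrix (Fin m) (Fin m) ℝ)
    (M : Matrix (Fin m) (Fin k) ℝ) : Prop :=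
  P.IsSymm ∧ P * P = P ∧ colSpan P = colSpan M

lemma nsq_eq {n : ℕ} (v : Fin n → ℝ) :
    ‖(WithLp.equiv 2 (Fin n → ℝ)).symm v‖ ^ 2 = v ⬝ᵥ v := by
  rw [EuclideanSpace.norm_eq, Real.sq_sqrt (by positivity)]
  simp [dotProduct, sq, WithLp.equiv_symm_apply, PiLp.toLp_apply, Real.norm_eq_abs, abs_mul_abs_self]

lemma ofLp_equiv_symm' {n : ℕ} (v : Fin n → ℝ) :
    ((WithLp.equiv 2 (Fin n → ℝ)).symm v).ofLp = v := rfl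

lemma toLp_eq_equiv_symm' {n : ℕ} (v : Fin n → ℝ) :
    WithLp.toLp 2 v = (WithLp.equiv 2 (Fin n → ℝ)).symm v := rfl

lemma mulVec_nsq_le {m n : ℕ} (M : Matrix (Fin m) (Fin n) ℝ) (v : Fin n → ℝ) :
    (M *ᵥ v) ⬝ᵥ (M *ᵥ v) ≤ opNorm M ^ 2 * (v ⬝ᵥ v) := by
  have h := (LinearMap.toContinuousLinearMap (Matrix.toEuclideanLin M)).le_opNorm
    ((WithLp.equiv 2 (Fin n → ℝ)).symm v)
  rw [LinearMap.coe_toContinuousLinearMap', Matrix.toEuclideanLin_apply,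
    ofLp_equiv_symm', toLp_eq_equiv_symm'] at h
  have h2 := pow_le_pow_left₀ (norm_nonneg _) h 2
  rwa [mul_pow, nsq_eq, nsq_eq] at h2

lemma opNorm_le_of {m n : ℕ} (M : Matrix (Fin m) (Fin n) ℝ) (C : ℝ) (hC : 0 ≤ C)
    (h : ∀ v : Fin n → ℝ, (M *ᵥ v) ⬝ᵥ (M *ᵥ v) ≤ C ^ 2 * (v ⬝ᵥ v)) : opNorm M ≤ C := by
  apply ContinuousLinearMap.opNorm_le_bound _ hC
  intro x
  have hx : x = (WithLp.equiv 2 (Fin n → ℝ)).symm (WithLp.equiv 2 (Fin n → ℝ) x) :=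
    (Equiv.symm_apply_apply _ _).symm
  set v := WithLp.equiv 2 (Fin n → ℝ) x with hv
  rw [hx, LinearMap.coe_toContinuousLinearMap', Matrix.toEuclideanLin_apply,
    ofLp_equiv_symm', toLp_eq_equiv_symm']
  rw [← pow_le_pow_iff_left₀ (norm_nonneg _) (by positivity) two_ne_zero, mul_pow,
    nsq_eq, nsq_eq]
  exact h v

lemma dot_self_nonneg' {n : ℕ} (v : Fin n → ℝ) : 0 ≤ v ⬝ᵥ v :=
  Finset.sum_nonneg fun _ _ => mul_self_nonneg _

lemma orth_isometry {m n : ℕ} (Um : Matrix (Fin m) (Fin n) ℝ) (h : Umᵀ * Um = 1)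
    (v : Fin n → ℝ) : (Um *ᵥ v) ⬝ᵥ (Um *ᵥ v) = v ⬝ᵥ v := by
  rw [dotProduct_mulVec, ← vecMul_transpose, vecMul_vecMul, h, vecMul_one]

lemma proj_contract {m : ℕ} (P : Matrix (Fin m) (Fin m) ℝ) (hs : P.IsSymm)
    (hi : P * P = P) (w : Fin m → ℝ) :
    ((1 - P) *ᵥ w) ⬝ᵥ ((1 - P) *ᵥ w) ≤ w ⬝ᵥ w := by
  have hPP : (P *ᵥ w) ⬝ᵥ (P *ᵥ w) = (P *ᵥ w) ⬝ᵥ w := by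
    rw [dotProduct_mulVec, ← mulVec_transpose, mulVec_mulVec, hs.eq, hi]
  have hcomm : w ⬝ᵥ (P *ᵥ w) = (P *ᵥ w) ⬝ᵥ w := dotProduct_comm _ _
  rw [sub_mulVec, one_mulVec, sub_dotProduct, dotProduct_sub, dotProduct_sub]
  have h0 : 0 ≤ (P *ᵥ w) ⬝ᵥ (P *ᵥ w) := dot_self_nonneg' _
  nlinarith [hPP, hcomm]

lemma sum_split {Sn d : ℕ} (hd : d ≤ Sn) (g : Fin Sn → ℝ) :
    ∑ i, g i = (∑ j : Fin d, g ⟨j, by omega⟩) +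
      ∑ k : Fin (Sn - d), g ⟨d + k, by have := k.isLt; omega⟩ := by
  rw [← Equiv.sum_comp (finSumFinEquiv.trans (finCongr (show d + (Sn - d) = Sn by omega))) g,
    Fintype.sum_sum_type]
  rfl

theorem stmt6 {S d ℓ : ℕ} (hdS : d ≤ S) (hℓ : d ≤ ℓ)
    (U V : Matrix (Fin S) (Fin S) ℝ) (hU : Uᵀ * U = 1) (hV : Vᵀ * V = 1)
    (σ : Fin S → ℝ) (hσ : Antitone σ) (hσ0 : ∀ i, 0 ≤ σ i)
    (A : Matrix (Fin S) (Fin S) ℝ) (hA : A = U * Matrix.diagonal σ * Vᵀ)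
    (Ad : Matrix (Fin S) (Fin S) ℝ)
    (hAd : Ad = U *
      (Matrix.of fun (i j : Fin S) => if i = j ∧ (i : ℕ) < d then σ i else 0) * Vᵀ)
    (Ω : Matrix (Fin S) (Fin ℓ) ℝ)
    (V₁ : Matrix (Fin S) (Fin d) ℝ)
    (hV₁ : V₁ = Matrix.of fun i (j : Fin d) => V i ⟨(j : ℕ), by omega⟩)
    (V₂ : Matrix (Fin S) (Fin (S - d)) ℝ)
    (hV₂ : V₂ = Matrix.of fun i (j : Fin (S - d)) =>
      V i ⟨d + (j : ℕ), by have := j.isLt; omega⟩)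
    (Sig₂ : Matrix (Fin (S - d)) (Fin (S - d)) ℝ)
    (hSig₂ : Sig₂ = Matrix.diagonal fun (j : Fin (S - d)) =>
      σ ⟨d + (j : ℕ), by have := j.isLt; omega⟩)
    (Ω₁ : Matrix (Fin d) (Fin ℓ) ℝ) (hΩ₁ : Ω₁ = V₁ᵀ * Ω)
    (Ω₂ : Matrix (Fin (S - d)) (Fin ℓ) ℝ) (hΩ₂ : Ω₂ = V₂ᵀ * Ω)
    (hfullrank : IsUnit (Ω₁ * Ω₁ᵀ))
    (PY : Matrix (Fin S) (Fin S) ℝ) (hPY : IsOrthProjOnto PY (A * Ω)) :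
    opNorm ((1 - PY) * Ad) ^ 2 ≤ opNorm (Sig₂ * Ω₂ * (Ω₁ᵀ * (Ω₁ * Ω₁ᵀ)⁻¹)) ^ 2 := by
  classical
  obtain ⟨hPsymm, hPidem, hPspan⟩ := hPY
  have hdet : IsUnit (Ω₁ * Ω₁ᵀ).det := (Matrix.isUnit_iff_isUnit_det _).mp hfullrank
  have hΩpinv : Ω₁ * (Ω₁ᵀ * (Ω₁ * Ω₁ᵀ)⁻¹) = 1 := by
    rw [← Matrix.mul_assoc]; exact Matrix.mul_nonsing_inv _ hdet
  set F := Sig₂ * Ω₂ * (Ω₁ᵀ * (Ω₁ * Ω₁ᵀ)⁻¹) with hFdef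
  have key : opNorm ((1 - PY) * Ad) ≤ opNorm F := by
    apply opNorm_le_of _ _ (norm_nonneg _)
    intro x
    set y : Fin d → ℝ := V₁ᵀ *ᵥ x with hy
    set c : Fin d → ℝ := fun j => if σ ⟨(j : ℕ), by omega⟩ = 0 then 0 else y j with hcdef
    set ω : Fin ℓ → ℝ := (Ω₁ᵀ * (Ω₁ * Ω₁ᵀ)⁻¹) *ᵥ c with hωdef
    set z : Fin S → ℝ := (A * Ω) *ᵥ ω with hzdef
    have hPz : PY *ᵥ z = z := by
      have hzmem : z ∈ colSpan PY := by
        rw [hPspan]; exact ⟨ω, rfl⟩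
      obtain ⟨u, hu⟩ := hzmem
      simp only [mulVecLin_apply] at hu
      rw [← hu, mulVec_mulVec, hPidem]
    have h1 : ((1 - PY) * Ad) *ᵥ x = (1 - PY) *ᵥ (Ad *ᵥ x - z) := by
      rw [mulVec_sub]
      have h0 : (1 - PY) *ᵥ z = 0 := by rw [sub_mulVec, one_mulVec, hPz, sub_self]
      rw [h0, sub_zero, mulVec_mulVec]
    have hD : (Matrix.of fun (i j : Fin S) => if i = j ∧ (i : ℕ) < d then σ i else 0)
        = Matrix.diagonal (fun i : Fin S => if (i : ℕ) < d then σ i else 0) := by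
      ext i j
      by_cases h : i = j <;> simp [Matrix.diagonal_apply, h, ite_and]
    have hVtop : ∀ (w : Fin S → ℝ) (j : Fin d),
        (Vᵀ *ᵥ w) ⟨(j : ℕ), by omega⟩ = (V₁ᵀ *ᵥ w) j := by
      intro w j
      simp [Matrix.mulVec, dotProduct, hV₁, Matrix.transpose_apply]
    have hVbot : ∀ (w : Fin S → ℝ) (k : Fin (S - d)),
        (Vᵀ *ᵥ w) ⟨d + (k : ℕ), by have := k.isLt; omega⟩ = (V₂ᵀ *ᵥ w) k := by
      intro w k
      simp [Matrix.mulVec, dotProduct, hV₂, Matrix.transpose_apply]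
    have hg1 : V₁ᵀ *ᵥ (Ω *ᵥ ω) = c := by
      rw [hωdef]
      simp only [mulVec_mulVec]
      rw [← Matrix.mul_assoc, ← hΩ₁, hΩpinv, one_mulVec]
    have hg2 : F *ᵥ c = Sig₂ *ᵥ (V₂ᵀ *ᵥ (Ω *ᵥ ω)) := by
      rw [hωdef]
      simp only [mulVec_mulVec]
      rw [hFdef, hΩ₂]
      simp only [Matrix.mul_assoc]
    set r : Fin S → ℝ := fun i => if h : (i : ℕ) < d then 0
      else -((F *ᵥ c) ⟨(i : ℕ) - d, by omega⟩) with hrdef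
    have hwz : Ad *ᵥ x - z = U *ᵥ r := by
      rw [hzdef, hA, hAd, hD]
      simp only [← mulVec_mulVec]
      rw [← mulVec_sub]
      refine congrArg (fun v => U *ᵥ v) ?_
      funext i
      simp only [Pi.sub_apply, mulVec_diagonal, hrdef]
      by_cases hi : (i : ℕ) < d
      · rw [if_pos hi, dif_pos hi]
        have e1 : (Vᵀ *ᵥ x) i = y ⟨(i : ℕ), hi⟩ := hVtop x ⟨(i : ℕ), hi⟩
        have e2 : (Vᵀ *ᵥ (Ω *ᵥ ω)) i = c ⟨(i : ℕ), hi⟩ := by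
          have := hVtop (Ω *ᵥ ω) ⟨(i : ℕ), hi⟩
          rwa [hg1] at this
        rw [e1, e2, hcdef]
        simp only []
        rcases eq_or_ne (σ i) 0 with hσ0 | hσ0
        · rw [if_pos (by exact hσ0), hσ0]; ring
        · rw [if_neg (by exact hσ0)]; ring
      · rw [if_neg hi, dif_neg hi]
        have e3 : (Vᵀ *ᵥ (Ω *ᵥ ω)) i = (V₂ᵀ *ᵥ (Ω *ᵥ ω)) ⟨(i : ℕ) - d, by omega⟩ := by
          have h := hVbot (Ω *ᵥ ω) ⟨(i : ℕ) - d, by omega⟩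
          convert h using 2
          apply Fin.ext; simp; omega
        have e4 : (F *ᵥ c) ⟨(i : ℕ) - d, by omega⟩
            = σ i * (V₂ᵀ *ᵥ (Ω *ᵥ ω)) ⟨(i : ℕ) - d, by omega⟩ := by
          rw [hg2, hSig₂, mulVec_diagonal]
          have : ((⟨d + ((⟨(i : ℕ) - d, by omega⟩ : Fin (S - d)) : ℕ), by omega⟩ : Fin S)) = i := by
            apply Fin.ext; simp; omega
          rw [this]
        rw [e3, e4]
        ring
    have hrr : r ⬝ᵥ r = (F *ᵥ c) ⬝ᵥ (F *ᵥ c) := by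
      have hs := sum_split hdS (fun i => r i * r i)
      have hr1 : ∀ j : Fin d, r ⟨(j : ℕ), by omega⟩ = 0 := by
        intro j
        simp only [hrdef]
        exact dif_pos j.isLt
      have hr2 : ∀ k : Fin (S - d),
          r ⟨d + (k : ℕ), by have := k.isLt; omega⟩ = -((F *ᵥ c) k) := by
        intro k
        simp only [hrdef]
        rw [dif_neg (by simp)]
        have hkk : (⟨d + (k : ℕ) - d, by omega⟩ : Fin (S - d)) = k := Fin.ext (by simp)
        rw [hkk]
      show ∑ i, r i * r i = ∑ k, (F *ᵥ c) k * (F *ᵥ c) k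
      rw [hs]
      simp only [hr1, hr2]
      simp
    have hcy : c ⬝ᵥ c ≤ y ⬝ᵥ y := by
      apply Finset.sum_le_sum
      intro j _
      simp only [hcdef]
      split_ifs with h
      · simpa using mul_self_nonneg (y j)
      · exact le_refl _
    have hyx : y ⬝ᵥ y ≤ x ⬝ᵥ x := by
      have h2 : (Vᵀ *ᵥ x) ⬝ᵥ (Vᵀ *ᵥ x) = x ⬝ᵥ x := by
        apply orth_isometry
        rw [transpose_transpose]
        exact mul_eq_one_comm.mp hV
      rw [← h2]
      have hs := sum_split hdS (fun i => (Vᵀ *ᵥ x) i * (Vᵀ *ᵥ x) i)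
      show ∑ j, y j * y j ≤ ∑ i, (Vᵀ *ᵥ x) i * (Vᵀ *ᵥ x) i
      rw [hs]
      have hyj : ∀ j : Fin d, y j = (Vᵀ *ᵥ x) ⟨(j : ℕ), by omega⟩ := fun j => (hVtop x j).symm
      have : (∑ j : Fin d, y j * y j)
          = ∑ j : Fin d, (Vᵀ *ᵥ x) ⟨(j : ℕ), by omega⟩ * (Vᵀ *ᵥ x) ⟨(j : ℕ), by omega⟩ := by
        apply Finset.sum_congr rfl
        intro j _
        rw [hyj j]
      rw [this]
      have hnn : 0 ≤ ∑ k : Fin (S - d),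
          (Vᵀ *ᵥ x) ⟨d + (k : ℕ), by have := k.isLt; omega⟩ *
            (Vᵀ *ᵥ x) ⟨d + (k : ℕ), by have := k.isLt; omega⟩ :=
        Finset.sum_nonneg fun k _ => mul_self_nonneg _
      linarith
    calc (((1 - PY) * Ad) *ᵥ x) ⬝ᵥ (((1 - PY) * Ad) *ᵥ x)
        = ((1 - PY) *ᵥ (Ad *ᵥ x - z)) ⬝ᵥ ((1 - PY) *ᵥ (Ad *ᵥ x - z)) := by rw [h1]
      _ ≤ (Ad *ᵥ x - z) ⬝ᵥ (Ad *ᵥ x - z) := proj_contract PY hPsymm hPidem _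
      _ = r ⬝ᵥ r := by rw [hwz, orth_isometry U hU]
      _ = (F *ᵥ c) ⬝ᵥ (F *ᵥ c) := hrr
      _ ≤ opNorm F ^ 2 * (c ⬝ᵥ c) := mulVec_nsq_le F c
      _ ≤ opNorm F ^ 2 * (y ⬝ᵥ y) := by
          apply mul_le_mul_of_nonneg_left hcy (by positivity)
      _ ≤ opNorm F ^ 2 * (x ⬝ᵥ x) := by
          apply mul_le_mul_of_nonneg_left hyx (by positivity)
  exact pow_le_pow_left₀ (norm_nonneg _) key 2
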